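/- Let O9 = {3,5,6,9,15,19,23,24}, which is an octad of the Golay code. Define Π̃ = { ν ∈ N : ⟨ν, f_n⟩ = 0 for all n ∈ O9 } and K̃ = { ν ∈ N : ⟨ν, f_n⟩ = 0 for all n ∉ O9 }. Then Π̃ and K̃ are primitive sublattices of N of ranks 16 and 8 respectively, and each is the orthogonal complement of the other in N. -/
import Mathlib

def indic (s : Finset ℕ) : Fin 24 → ZMod 2 := fun i => if (i : ℕ) + 1 ∈ s then 1 else 0

def golayBasisSets : Fin 12 → Finset ℕ :=
  ![{1,2,16,18,5,12,22,3}, {7,4,19,10,12,15,8,16}, {23,3,9,19,13,18,8,11},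
    {6,3,22,4,21,17,15,9}, {20,10,11,17,14,13,22,12}, {24,2,10,19,9,5,14,21},
    {8,7,15,17,11,23,18,16}, {16,1,2,21,4,7,8,18}, {18,1,16,8,23,13,14,5},
    {8,7,15,9,19,23,4,22,13,18,1,16}, {18,23,13,22,3,1,11,10,2,16,7,8},
    {16,1,2,10,12,7,5,9,15,8,23,18}]

def golayCode : Submodule (ZMod 2) (Fin 24 → ZMod 2) :=
  Submodule.span (ZMod 2) (Set.range fun i => indic (golayBasisSets i))

/-- The ambient 24-dimensional rational quadratic space. -/
abbrev V24 := Fin 24 → ℚ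

/-- The bilinear form on `V24` for which the standard basis vectors have norm 2. -/
def B24 (u v : V24) : ℚ := 2 * ∑ i, u i * v i

/-- The generators `f_n` of the root sublattice `R` of type `A₁²⁴`. -/
def f24 (n : Fin 24) : V24 := fun i => if i = n then 1 else 0

/-- The Niemeier lattice `N` of type `A₁²⁴`:
`N = { v ∈ (1/2)R : (v mod R) ∈ 𝒢₂₄ }`. -/
def NSet : Set V24 :=
  { v | ∃ w : Fin 24 → ℤ, (∀ i, v i = (w i : ℚ) / 2) ∧
      (fun i => ((w i : ZMod 2))) ∈ golayCode }


/-- The weight of a vector in `𝔽₂²⁴`: the number of nonzero coordinates. -/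
def weight (v : Fin 24 → ZMod 2) : ℕ := (Finset.univ.filter fun i => v i ≠ 0).card

/-- The special octad `𝒪₉ = {3,5,6,9,15,19,23,24}` (as a set of labels in `{1,…,24}`). -/
def O9 : Finset ℕ := {3, 5, 6, 9, 15, 19, 23, 24}

/-- `Π̃ = { ν ∈ N : ⟨ν, f_n⟩ = 0 for all n ∈ 𝒪₉ }`. -/
def PiTilde : Set V24 :=
  { ν | ν ∈ NSet ∧ ∀ n : Fin 24, (n : ℕ) + 1 ∈ O9 → B24 ν (f24 n) = 0 }

/-- `K̃ = { ν ∈ N : ⟨ν, f_n⟩ = 0 for all n ∉ 𝒪₉ }`. -/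
def KTilde : Set V24 :=
  { ν | ν ∈ NSet ∧ ∀ n : Fin 24, (n : ℕ) + 1 ∉ O9 → B24 ν (f24 n) = 0 }

def gB : Fin 12 → Fin 24 → Bool :=
  ![![true, true, true, false, true, false, false, false, false, false, false, true, false, false, false, true, false, true, false, false, false, true, false, false],
   ![false, false, false, true, false, false, true, true, false, true, false, true, false, false, true, true, false, false, true, false, false, false, false, false],
   ![false, false, true, false, false, false, false, true, true, false, true, false, true, false, false, false, false, true, true, false, false, false, true, false],
   ![false, false, true, true, false, true, false, false, true, false, false, false, false, false, true, false, true, false, false, false, true, true, false, false],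
   ![false, false, false, false, false, false, false, false, false, true, true, true, true, true, false, false, true, false, false, true, false, true, false, false],
   ![false, true, false, false, true, false, false, false, true, true, false, false, false, true, false, false, false, false, true, false, true, false, false, true],
   ![false, false, false, false, false, false, true, true, false, false, true, false, false, false, true, true, true, true, false, false, false, false, true, false],
   ![true, true, false, true, false, false, true, true, false, false, false, false, false, false, false, true, false, true, false, false, true, false, false, false],
   ![true, false, false, false, true, false, false, true, false, false, false, false, true, true, false, true, false, true, false, false, false, false, true, false],
   ![true, false, false, true, false, false, true, true, true, false, false, false, true, false, true, true, false, true, true, false, false, true, true, false],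
   ![true, true, true, false, false, false, true, true, false, true, true, false, true, false, false, true, false, true, false, false, false, true, true, false],
   ![true, true, false, false, true, false, true, true, true, true, false, true, false, false, true, true, false, true, false, false, false, false, true, false]]

def oB : Fin 24 → Bool := ![false, false, true, false, true, true, false, false, true, false, false, false, false, false, true, false, false, false, true, false, false, false, true, true]

def XS (b0 b1 b2 b3 b4 b5 b6 b7 b8 b9 b10 b11 : Bool) (n : Fin 24) : Bool :=
  ((b0 && gB 0 n) ^^ ((b1 && gB 1 n) ^^ ((b2 && gB 2 n) ^^ ((b3 && gB 3 n) ^^ ((b4 && gB 4 n) ^^ ((b5 && gB 5 n) ^^ ((b6 && gB 6 n) ^^ ((b7 && gB 7 n) ^^ ((b8 && gB 8 n) ^^ ((b9 && gB 9 n) ^^ ((b10 && gB 10 n) ^^ (b11 && gB 11 n))))))))))))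

def bz (b : Bool) : ZMod 2 := if b then 1 else 0
def zb (x : ZMod 2) : Bool := decide (x = 1)

lemma addbz : ∀ a b : Bool, bz (a ^^ b) = bz a + bz b := by decide
lemma mulbz : ∀ (x : ZMod 2) (b : Bool), x * bz b = bz (zb x && b) := by decide
lemma bz_eq_zero : ∀ b : Bool, bz b = 0 → b = false := by decide

set_option maxRecDepth 4000 in
set_option maxHeartbeats 1000000 in
lemma bridge : ∀ (i : Fin 12) (j : Fin 24), indic (golayBasisSets i) j = bz (gB i j) := by decide

lemma sum12 (f : Fin 12 → ZMod 2) : ∑ i, f i =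
    f 0 + (f 1 + (f 2 + (f 3 + (f 4 + (f 5 + (f 6 + (f 7 + (f 8 + (f 9 + (f 10 + (f 11 + 0))))))))))) := rfl

lemma sum_apply_eq (c : Fin 12 → ZMod 2) (n : Fin 24) :
    (∑ i, c i • indic (golayBasisSets i)) n = bz (XS (zb (c 0)) (zb (c 1)) (zb (c 2)) (zb (c 3)) (zb (c 4)) (zb (c 5)) (zb (c 6)) (zb (c 7)) (zb (c 8)) (zb (c 9)) (zb (c 10)) (zb (c 11)) n) := by
  rw [Finset.sum_apply, sum12 (fun i => (c i • indic (golayBasisSets i)) n)]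
  simp only [Pi.smul_apply, smul_eq_mul, bridge, mulbz, add_zero, ← addbz]
  rfl

lemma golay_mem_iff (x : Fin 24 → ZMod 2) : x ∈ golayCode ↔
    ∃ c : Fin 12 → ZMod 2, ∑ i, c i • indic (golayBasisSets i) = x :=
  Submodule.mem_span_range_iff_exists_fun _

set_option maxRecDepth 10000 in
set_option maxHeartbeats 4000000 in
lemma factK : ∀ b0 b1 b2 b3 b4 b5 b6 b7 b8 b9 b10 b11 : Bool, (∀ n, oB n = false → XS b0 b1 b2 b3 b4 b5 b6 b7 b8 b9 b10 b11 n = false) →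
    (XS b0 b1 b2 b3 b4 b5 b6 b7 b8 b9 b10 b11 (⟨4, by norm_num⟩ : Fin 24) = XS b0 b1 b2 b3 b4 b5 b6 b7 b8 b9 b10 b11 (⟨2, by norm_num⟩ : Fin 24) ∧
      XS b0 b1 b2 b3 b4 b5 b6 b7 b8 b9 b10 b11 (⟨5, by norm_num⟩ : Fin 24) = XS b0 b1 b2 b3 b4 b5 b6 b7 b8 b9 b10 b11 (⟨2, by norm_num⟩ : Fin 24) ∧
      XS b0 b1 b2 b3 b4 b5 b6 b7 b8 b9 b10 b11 (⟨8, by norm_num⟩ : Fin 24) = XS b0 b1 b2 b3 b4 b5 b6 b7 b8 b9 b10 b11 (⟨2, by norm_num⟩ : Fin 24) ∧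
      XS b0 b1 b2 b3 b4 b5 b6 b7 b8 b9 b10 b11 (⟨14, by norm_num⟩ : Fin 24) = XS b0 b1 b2 b3 b4 b5 b6 b7 b8 b9 b10 b11 (⟨2, by norm_num⟩ : Fin 24) ∧
      XS b0 b1 b2 b3 b4 b5 b6 b7 b8 b9 b10 b11 (⟨18, by norm_num⟩ : Fin 24) = XS b0 b1 b2 b3 b4 b5 b6 b7 b8 b9 b10 b11 (⟨2, by norm_num⟩ : Fin 24) ∧
      XS b0 b1 b2 b3 b4 b5 b6 b7 b8 b9 b10 b11 (⟨22, by norm_num⟩ : Fin 24) = XS b0 b1 b2 b3 b4 b5 b6 b7 b8 b9 b10 b11 (⟨2, by norm_num⟩ : Fin 24) ∧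
      XS b0 b1 b2 b3 b4 b5 b6 b7 b8 b9 b10 b11 (⟨23, by norm_num⟩ : Fin 24) = XS b0 b1 b2 b3 b4 b5 b6 b7 b8 b9 b10 b11 (⟨2, by norm_num⟩ : Fin 24)) := by decide

set_option maxRecDepth 10000 in
set_option maxHeartbeats 4000000 in
lemma factP : ∀ b0 b1 b2 b3 b4 b5 b6 b7 b8 b9 b10 b11 : Bool, (∀ n, oB n = true → XS b0 b1 b2 b3 b4 b5 b6 b7 b8 b9 b10 b11 n = false) →
    (XS b0 b1 b2 b3 b4 b5 b6 b7 b8 b9 b10 b11 (⟨7, by norm_num⟩ : Fin 24) = (XS b0 b1 b2 b3 b4 b5 b6 b7 b8 b9 b10 b11 (⟨0, by norm_num⟩ : Fin 24) ^^ (XS b0 b1 b2 b3 b4 b5 b6 b7 b8 b9 b10 b11 (⟨3, by norm_num⟩ : Fin 24) ^^ XS b0 b1 b2 b3 b4 b5 b6 b7 b8 b9 b10 b11 (⟨6, by norm_num⟩ : Fin 24))) ∧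
      XS b0 b1 b2 b3 b4 b5 b6 b7 b8 b9 b10 b11 (⟨10, by norm_num⟩ : Fin 24) = (XS b0 b1 b2 b3 b4 b5 b6 b7 b8 b9 b10 b11 (⟨1, by norm_num⟩ : Fin 24) ^^ (XS b0 b1 b2 b3 b4 b5 b6 b7 b8 b9 b10 b11 (⟨3, by norm_num⟩ : Fin 24) ^^ XS b0 b1 b2 b3 b4 b5 b6 b7 b8 b9 b10 b11 (⟨9, by norm_num⟩ : Fin 24))) ∧
      XS b0 b1 b2 b3 b4 b5 b6 b7 b8 b9 b10 b11 (⟨11, by norm_num⟩ : Fin 24) = (XS b0 b1 b2 b3 b4 b5 b6 b7 b8 b9 b10 b11 (⟨0, by norm_num⟩ : Fin 24) ^^ (XS b0 b1 b2 b3 b4 b5 b6 b7 b8 b9 b10 b11 (⟨1, by norm_num⟩ : Fin 24) ^^ (XS b0 b1 b2 b3 b4 b5 b6 b7 b8 b9 b10 b11 (⟨3, by norm_num⟩ : Fin 24) ^^ (XS b0 b1 b2 b3 b4 b5 b6 b7 b8 b9 b10 b11 (⟨6, by norm_num⟩ : Fin 24) ^^ XS b0 b1 b2 b3 b4 b5 b6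 b7 b8 b9 b10 b11 (⟨9, by norm_num⟩ : Fin 24))))) ∧
      XS b0 b1 b2 b3 b4 b5 b6 b7 b8 b9 b10 b11 (⟨12, by norm_num⟩ : Fin 24) = (XS b0 b1 b2 b3 b4 b5 b6 b7 b8 b9 b10 b11 (⟨3, by norm_num⟩ : Fin 24) ^^ (XS b0 b1 b2 b3 b4 b5 b6 b7 b8 b9 b10 b11 (⟨6, by norm_num⟩ : Fin 24) ^^ XS b0 b1 b2 b3 b4 b5 b6 b7 b8 b9 b10 b11 (⟨9, by norm_num⟩ : Fin 24))) ∧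
      XS b0 b1 b2 b3 b4 b5 b6 b7 b8 b9 b10 b11 (⟨13, by norm_num⟩ : Fin 24) = (XS b0 b1 b2 b3 b4 b5 b6 b7 b8 b9 b10 b11 (⟨0, by norm_num⟩ : Fin 24) ^^ (XS b0 b1 b2 b3 b4 b5 b6 b7 b8 b9 b10 b11 (⟨6, by norm_num⟩ : Fin 24) ^^ XS b0 b1 b2 b3 b4 b5 b6 b7 b8 b9 b10 b11 (⟨9, by norm_num⟩ : Fin 24))) ∧
      XS b0 b1 b2 b3 b4 b5 b6 b7 b8 b9 b10 b11 (⟨15, by norm_num⟩ : Fin 24) = (XS b0 b1 b2 b3 b4 b5 b6 b7 b8 b9 b10 b11 (⟨1, by norm_num⟩ : Fin 24) ^^ (XS b0 b1 b2 b3 b4 b5 b6 b7 b8 b9 b10 b11 (⟨3, by norm_num⟩ : Fin 24) ^^ XS b0 b1 b2 b3 b4 b5 b6 b7 b8 b9 b10 b11 (⟨6, by norm_num⟩ : Fin 24))) ∧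
      XS b0 b1 b2 b3 b4 b5 b6 b7 b8 b9 b10 b11 (⟨16, by norm_num⟩ : Fin 24) = (XS b0 b1 b2 b3 b4 b5 b6 b7 b8 b9 b10 b11 (⟨1, by norm_num⟩ : Fin 24) ^^ (XS b0 b1 b2 b3 b4 b5 b6 b7 b8 b9 b10 b11 (⟨6, by norm_num⟩ : Fin 24) ^^ XS b0 b1 b2 b3 b4 b5 b6 b7 b8 b9 b10 b11 (⟨9, by norm_num⟩ : Fin 24))) ∧
      XS b0 b1 b2 b3 b4 b5 b6 b7 b8 b9 b10 b11 (⟨17, by norm_num⟩ : Fin 24) = (XS b0 b1 b2 b3 b4 b5 b6 b7 b8 b9 b10 b11 (⟨0, by norm_num⟩ : Fin 24) ^^ (XS b0 b1 b2 b3 b4 b5 b6 b7 b8 b9 b10 b11 (⟨1, by norm_num⟩ : Fin 24) ^^ XS b0 b1 b2 b3 b4 b5 b6 b7 b8 b9 b10 b11 (⟨3, by norm_num⟩ : Fin 24))) ∧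
      XS b0 b1 b2 b3 b4 b5 b6 b7 b8 b9 b10 b11 (⟨19, by norm_num⟩ : Fin 24) = (XS b0 b1 b2 b3 b4 b5 b6 b7 b8 b9 b10 b11 (⟨0, by norm_num⟩ : Fin 24) ^^ (XS b0 b1 b2 b3 b4 b5 b6 b7 b8 b9 b10 b11 (⟨1, by norm_num⟩ : Fin 24) ^^ XS b0 b1 b2 b3 b4 b5 b6 b7 b8 b9 b10 b11 (⟨9, by norm_num⟩ : Fin 24))) ∧
      XS b0 b1 b2 b3 b4 b5 b6 b7 b8 b9 b10 b11 (⟨20, by norm_num⟩ : Fin 24) = (XS b0 b1 b2 b3 b4 b5 b6 b7 b8 b9 b10 b11 (⟨0, by norm_num⟩ : Fin 24) ^^ (XS b0 b1 b2 b3 b4 b5 b6 b7 b8 b9 b10 b11 (⟨1, by norm_num⟩ : Fin 24) ^^ XS b0 b1 b2 b3 b4 b5 b6 b7 b8 b9 b10 b11 (⟨6, by norm_num⟩ : Fin 24))) ∧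
      XS b0 b1 b2 b3 b4 b5 b6 b7 b8 b9 b10 b11 (⟨21, by norm_num⟩ : Fin 24) = (XS b0 b1 b2 b3 b4 b5 b6 b7 b8 b9 b10 b11 (⟨0, by norm_num⟩ : Fin 24) ^^ (XS b0 b1 b2 b3 b4 b5 b6 b7 b8 b9 b10 b11 (⟨3, by norm_num⟩ : Fin 24) ^^ XS b0 b1 b2 b3 b4 b5 b6 b7 b8 b9 b10 b11 (⟨9, by norm_num⟩ : Fin 24)))) := by decide

lemma par2 {a b : ℤ} (h : (a : ZMod 2) = (b : ZMod 2)) : 2 ∣ a - b := by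
  have h2 : ((a - b : ℤ) : ZMod 2) = 0 := by push_cast; rw [h]; ring
  exact (ZMod.intCast_zmod_eq_zero_iff_dvd _ 2).mp h2

lemma par3 {a b c d : ℤ} (h : (a : ZMod 2) = (b : ZMod 2) + ((c : ZMod 2) + (d : ZMod 2))) :
    2 ∣ a - (b + (c + d)) :=
  par2 (h.trans (by push_cast; ring))

lemma par5 {a b c d e f : ℤ}
    (h : (a : ZMod 2) = (b : ZMod 2) + ((c : ZMod 2) + ((d : ZMod 2) + ((e : ZMod 2) + (f : ZMod 2))))) :
    2 ∣ a - (b + (c + (d + (e + f)))) :=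
  par2 (h.trans (by push_cast; ring))

lemma oB_mem : ∀ n : Fin 24, ((n : ℕ) + 1 ∈ O9) ↔ oB n = true := by decide

lemma B24_apply (v : V24) (n : Fin 24) : B24 v (f24 n) = 2 * v n := by
  unfold B24 f24
  congr 1
  simp [mul_ite]

lemma two_mul_eq_zero {a : ℚ} (h : 2 * a = 0) : a = 0 := by linarith

lemma sum16 (f : Fin 16 → ℚ) : ∑ i, f i = f (⟨0, by norm_num⟩ : Fin 16) + (f (⟨1, by norm_num⟩ : Fin 16) + (f (⟨2, by norm_num⟩ : Fin 16) + (f (⟨3, by norm_num⟩ : Fin 16) + (f (⟨4, by norm_num⟩ : Fin 16) + (f (⟨5, by norm_num⟩ : Fin 16) + (f (⟨6, by norm_num⟩ : Fin 16) + (f (⟨7, by norm_num⟩ : Fin 16) + (f (⟨8, by norm_num⟩ : Fin 16) + (f (⟨9, by norm_num⟩ : Fin 16) + (f (⟨10, by norm_num⟩ : Fin 16) + (f (⟨11, by norm_num⟩ : Fin 16) + (f (⟨12, by norm_num⟩ : Fin 16) + (f (⟨13, by norm_num⟩ : Fin 16) + (f (⟨14, by norm_num⟩ : Fin 16) + (f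 (⟨15, by norm_num⟩ : Fin 16) + 0))))))))))))))) := rfl

lemma sum8 (f : Fin 8 → ℚ) : ∑ i, f i = f (⟨0, by norm_num⟩ : Fin 8) + (f (⟨1, by norm_num⟩ : Fin 8) + (f (⟨2, by norm_num⟩ : Fin 8) + (f (⟨3, by norm_num⟩ : Fin 8) + (f (⟨4, by norm_num⟩ : Fin 8) + (f (⟨5, by norm_num⟩ : Fin 8) + (f (⟨6, by norm_num⟩ : Fin 8) + (f (⟨7, by norm_num⟩ : Fin 8) + 0))))))) := rfl

lemma expand16 (c : Fin 16 → ℤ) (b : Fin 16 → V24) (n : Fin 24) :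
    (∑ i, c i • b i) n = (c (⟨0, by norm_num⟩ : Fin 16) : ℚ) * b (⟨0, by norm_num⟩ : Fin 16) n + ((c (⟨1, by norm_num⟩ : Fin 16) : ℚ) * b (⟨1, by norm_num⟩ : Fin 16) n + ((c (⟨2, by norm_num⟩ : Fin 16) : ℚ) * b (⟨2, by norm_num⟩ : Fin 16) n + ((c (⟨3, by norm_num⟩ : Fin 16) : ℚ) * b (⟨3, by norm_num⟩ : Fin 16) n + ((c (⟨4, by norm_num⟩ : Fin 16) : ℚ) * b (⟨4, by norm_num⟩ : Fin 16) n + ((c (⟨5, by norm_num⟩ : Fin 16) : ℚ) * b (⟨5, by norm_num⟩ : Fin 16) n + ((c (⟨6, by norm_num⟩ : Fin 16) : ℚ) * b (⟨6, by norm_num⟩ : Fin 16) n + ((c (⟨7, by norm_num⟩ : Fin 16) : ℚ) * b (⟨7, by norm_num⟩ : Fin 16) n + ((c (⟨8, by norm_num⟩ : Fin 16) : ℚ) * b (⟨8, by norm_num⟩ : Fin 16) n + ((c (⟨9, by norm_num⟩ : Fin 16) : ℚ) * b (⟨9, by norm_num⟩ : Fin 16) n + ((c (⟨10, by norm_num⟩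 : Fin 16) : ℚ) * b (⟨10, by norm_num⟩ : Fin 16) n + ((c (⟨11, by norm_num⟩ : Fin 16) : ℚ) * b (⟨11, by norm_num⟩ : Fin 16) n + ((c (⟨12, by norm_num⟩ : Fin 16) : ℚ) * b (⟨12, by norm_num⟩ : Fin 16) n + ((c (⟨13, by norm_num⟩ : Fin 16) : ℚ) * b (⟨13, by norm_num⟩ : Fin 16) n + ((c (⟨14, by norm_num⟩ : Fin 16) : ℚ) * b (⟨14, by norm_num⟩ : Fin 16) n + ((c (⟨15, by norm_num⟩ : Fin 16) : ℚ) * b (⟨15, by norm_num⟩ : Fin 16) n + 0))))))))))))))) := by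
  rw [Finset.sum_apply, sum16 (fun i => (c i • b i) n)]
  simp [zsmul_eq_mul]

lemma expand8 (c : Fin 8 → ℤ) (b : Fin 8 → V24) (n : Fin 24) :
    (∑ i, c i • b i) n = (c (⟨0, by norm_num⟩ : Fin 8) : ℚ) * b (⟨0, by norm_num⟩ : Fin 8) n + ((c (⟨1, by norm_num⟩ : Fin 8) : ℚ) * b (⟨1, by norm_num⟩ : Fin 8) n + ((c (⟨2, by norm_num⟩ : Fin 8) : ℚ) * b (⟨2, by norm_num⟩ : Fin 8) n + ((c (⟨3, by norm_num⟩ : Fin 8) : ℚ) * b (⟨3, by norm_num⟩ : Fin 8) n + ((c (⟨4, by norm_num⟩ : Fin 8) : ℚ) * b (⟨4, by norm_num⟩ : Fin 8) n + ((c (⟨5, by norm_num⟩ : Fin 8) : ℚ) * b (⟨5, by norm_num⟩ : Fin 8) n + ((c (⟨6, by norm_num⟩ : Fin 8) : ℚ) * b (⟨6, by norm_num⟩ : Fin 8) n + ((c (⟨7, by norm_num⟩ : Fin 8) : ℚ) * b (⟨7, by norm_num⟩ : Fin 8) n + 0))))))) := by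
  rw [Finset.sum_apply, sum8 (fun i => (c i • b i) n)]
  simp [zsmul_eq_mul]

lemma funext24 {f g : V24} (h0 : f (⟨0, by norm_num⟩ : Fin 24) = g (⟨0, by norm_num⟩ : Fin 24)) (h1 : f (⟨1, by norm_num⟩ : Fin 24) = g (⟨1, by norm_num⟩ : Fin 24)) (h2 : f (⟨2, by norm_num⟩ : Fin 24) = g (⟨2, by norm_num⟩ : Fin 24)) (h3 : f (⟨3, by norm_num⟩ : Fin 24) = g (⟨3, by norm_num⟩ : Fin 24)) (h4 : f (⟨4, by norm_num⟩ : Fin 24) = g (⟨4, by norm_num⟩ : Fin 24)) (h5 : f (⟨5, by norm_num⟩ : Fin 24) = g (⟨5, by norm_num⟩ : Fin 24)) (h6 : f (⟨6, by norm_num⟩ : Fin 24) = g (⟨6, by norm_num⟩ : Fin 24)) (h7 : f (⟨7, by norm_num⟩ : Fin 24) = g (⟨7, by norm_num⟩ : Fin 24)) (h8 : f (⟨8, by norm_num⟩ : Fin 24) = g (⟨8, by norm_num⟩ : Fin 24)) (h9 : f (⟨9, by norm_num⟩ : Fin 24) = g (⟨9, by norm_num⟩ : Fin 24)) (h10 :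 f (⟨10, by norm_num⟩ : Fin 24) = g (⟨10, by norm_num⟩ : Fin 24)) (h11 : f (⟨11, by norm_num⟩ : Fin 24) = g (⟨11, by norm_num⟩ : Fin 24)) (h12 : f (⟨12, by norm_num⟩ : Fin 24) = g (⟨12, by norm_num⟩ : Fin 24)) (h13 : f (⟨13, by norm_num⟩ : Fin 24) = g (⟨13, by norm_num⟩ : Fin 24)) (h14 : f (⟨14, by norm_num⟩ : Fin 24) = g (⟨14, by norm_num⟩ : Fin 24)) (h15 : f (⟨15, by norm_num⟩ : Fin 24) = g (⟨15, by norm_num⟩ : Fin 24)) (h16 : f (⟨16, by norm_num⟩ : Fin 24) = g (⟨16, by norm_num⟩ : Fin 24)) (h17 : f (⟨17, by norm_num⟩ : Fin 24) = g (⟨17, by norm_num⟩ : Fin 24)) (h18 : f (⟨18, by norm_num⟩ : Fin 24) = g (⟨18, by norm_num⟩ : Fin 24)) (h19 : f (⟨19, by norm_num⟩ : Fin 24) = g (⟨19, by norm_num⟩ : Fin 24)) (h20 : f (⟨20, by norm_num⟩ : Fin 24) = g (⟨20, by norm_num⟩ : Fin 24)) (h21 : f (⟨21, by norm_num⟩ :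 Fin 24) = g (⟨21, by norm_num⟩ : Fin 24)) (h22 : f (⟨22, by norm_num⟩ : Fin 24) = g (⟨22, by norm_num⟩ : Fin 24)) (h23 : f (⟨23, by norm_num⟩ : Fin 24) = g (⟨23, by norm_num⟩ : Fin 24)) : f = g := by
  funext n; fin_cases n
  exacts [h0, h1, h2, h3, h4, h5, h6, h7, h8, h9, h10, h11, h12, h13, h14, h15, h16, h17, h18, h19, h20, h21, h22, h23]

def pw : Fin 16 → Fin 24 → ℤ :=
  ![
   ![1, 0, 0, 0, 0, 0, 0, 1, 0, 0, 0, 1, 0, 1, 0, 0, 0, 1, 0, 1, 1, 1, 0, 0],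
   ![0, 1, 0, 0, 0, 0, 0, 0, 0, 0, 1, 1, 0, 0, 0, 1, 1, 1, 0, 1, 1, 0, 0, 0],
   ![0, 0, 0, 1, 0, 0, 0, 1, 0, 0, 1, 1, 1, 0, 0, 1, 0, 1, 0, 0, 0, 1, 0, 0],
   ![0, 0, 0, 0, 0, 0, 1, 1, 0, 0, 0, 1, 1, 1, 0, 1, 1, 0, 0, 0, 1, 0, 0, 0],
   ![0, 0, 0, 0, 0, 0, 0, 0, 0, 1, 1, 1, 1, 1, 0, 0, 1, 0, 0, 1, 0, 1, 0, 0],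
   ![0, 0, 0, 0, 0, 0, 0, 2, 0, 0, 0, 0, 0, 0, 0, 0, 0, 0, 0, 0, 0, 0, 0, 0],
   ![0, 0, 0, 0, 0, 0, 0, 0, 0, 0, 2, 0, 0, 0, 0, 0, 0, 0, 0, 0, 0, 0, 0, 0],
   ![0, 0, 0, 0, 0, 0, 0, 0, 0, 0, 0, 2, 0, 0, 0, 0, 0, 0, 0, 0, 0, 0, 0, 0],
   ![0, 0, 0, 0, 0, 0, 0, 0, 0, 0, 0, 0, 2, 0, 0, 0, 0, 0, 0, 0, 0, 0, 0, 0],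
   ![0, 0, 0, 0, 0, 0, 0, 0, 0, 0, 0, 0, 0, 2, 0, 0, 0, 0, 0, 0, 0, 0, 0, 0],
   ![0, 0, 0, 0, 0, 0, 0, 0, 0, 0, 0, 0, 0, 0, 0, 2, 0, 0, 0, 0, 0, 0, 0, 0],
   ![0, 0, 0, 0, 0, 0, 0, 0, 0, 0, 0, 0, 0, 0, 0, 0, 2, 0, 0, 0, 0, 0, 0, 0],
   ![0, 0, 0, 0, 0, 0, 0, 0, 0, 0, 0, 0, 0, 0, 0, 0, 0, 2, 0, 0, 0, 0, 0, 0],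
   ![0, 0, 0, 0, 0, 0, 0, 0, 0, 0, 0, 0, 0, 0, 0, 0, 0, 0, 0, 2, 0, 0, 0, 0],
   ![0, 0, 0, 0, 0, 0, 0, 0, 0, 0, 0, 0, 0, 0, 0, 0, 0, 0, 0, 0, 2, 0, 0, 0],
   ![0, 0, 0, 0, 0, 0, 0, 0, 0, 0, 0, 0, 0, 0, 0, 0, 0, 0, 0, 0, 0, 2, 0, 0]]

def kw : Fin 8 → Fin 24 → ℤ :=
  ![
   ![0, 0, 1, 0, 1, 1, 0, 0, 1, 0, 0, 0, 0, 0, 1, 0, 0, 0, 1, 0, 0, 0, 1, 1],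
   ![0, 0, 0, 0, 2, 0, 0, 0, 0, 0, 0, 0, 0, 0, 0, 0, 0, 0, 0, 0, 0, 0, 0, 0],
   ![0, 0, 0, 0, 0, 2, 0, 0, 0, 0, 0, 0, 0, 0, 0, 0, 0, 0, 0, 0, 0, 0, 0, 0],
   ![0, 0, 0, 0, 0, 0, 0, 0, 2, 0, 0, 0, 0, 0, 0, 0, 0, 0, 0, 0, 0, 0, 0, 0],
   ![0, 0, 0, 0, 0, 0, 0, 0, 0, 0, 0, 0, 0, 0, 2, 0, 0, 0, 0, 0, 0, 0, 0, 0],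
   ![0, 0, 0, 0, 0, 0, 0, 0, 0, 0, 0, 0, 0, 0, 0, 0, 0, 0, 2, 0, 0, 0, 0, 0],
   ![0, 0, 0, 0, 0, 0, 0, 0, 0, 0, 0, 0, 0, 0, 0, 0, 0, 0, 0, 0, 0, 0, 2, 0],
   ![0, 0, 0, 0, 0, 0, 0, 0, 0, 0, 0, 0, 0, 0, 0, 0, 0, 0, 0, 0, 0, 0, 0, 2]]

def pB : Fin 16 → V24 := fun i n => (pw i n : ℚ) / 2
def kB : Fin 8 → V24 := fun i n => (kw i n : ℚ) / 2

lemma gmem (i : Fin 12) : indic (golayBasisSets i) ∈ golayCode :=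
  Submodule.subset_span ⟨i, rfl⟩

set_option maxRecDepth 4000 in
set_option maxHeartbeats 1000000 in
lemma pwGolay : ∀ i : Fin 16, (fun n => ((pw i n : ℤ) : ZMod 2)) ∈ golayCode := by
  intro i; fin_cases i
  · rw [show (fun n => ((pw (⟨0, by norm_num⟩ : Fin 16) n : ℤ) : ZMod 2)) = indic (golayBasisSets 2) + indic (golayBasisSets 4) + indic (golayBasisSets 6) + indic (golayBasisSets 7) + indic (golayBasisSets 9) + indic (golayBasisSets 10) from by decide]
    exact (add_mem (add_mem (add_mem (add_mem (add_mem (gmem 2) (gmem 4)) (gmem 6)) (gmem 7)) (gmem 9)) (gmem 10))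
  · rw [show (fun n => ((pw (⟨1, by norm_num⟩ : Fin 16) n : ℤ) : ZMod 2)) = indic (golayBasisSets 1) + indic (golayBasisSets 2) + indic (golayBasisSets 4) + indic (golayBasisSets 7) + indic (golayBasisSets 8) + indic (golayBasisSets 10) + indic (golayBasisSets 11) from by decide]
    exact (add_mem (add_mem (add_mem (add_mem (add_mem (add_mem (gmem 1) (gmem 2)) (gmem 4)) (gmem 7)) (gmem 8)) (gmem 10)) (gmem 11))
  · rw [show (fun n => ((pw (⟨2, by norm_num⟩ : Fin 16) n : ℤ) : ZMod 2)) = indic (golayBasisSets 0) + indic (golayBasisSets 1) + indic (golayBasisSets 2) + indic (golayBasisSets 11) from by decide]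
    exact (add_mem (add_mem (add_mem (gmem 0) (gmem 1)) (gmem 2)) (gmem 11))
  · rw [show (fun n => ((pw (⟨3, by norm_num⟩ : Fin 16) n : ℤ) : ZMod 2)) = indic (golayBasisSets 0) + indic (golayBasisSets 2) + indic (golayBasisSets 6) + indic (golayBasisSets 7) + indic (golayBasisSets 8) + indic (golayBasisSets 9) from by decide]
    exact (add_mem (add_mem (add_mem (add_mem (add_mem (gmem 0) (gmem 2)) (gmem 6)) (gmem 7)) (gmem 8)) (gmem 9))
  · rw [show (fun n => ((pw (⟨4, by norm_num⟩ : Fin 16) n : ℤ) : ZMod 2)) = indic (golayBasisSets 4) from by decide]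
    exact (gmem 4)
  · rw [show (fun n => ((pw (⟨5, by norm_num⟩ : Fin 16) n : ℤ) : ZMod 2)) = 0 from by decide]
    exact zero_mem _
  · rw [show (fun n => ((pw (⟨6, by norm_num⟩ : Fin 16) n : ℤ) : ZMod 2)) = 0 from by decide]
    exact zero_mem _
  · rw [show (fun n => ((pw (⟨7, by norm_num⟩ : Fin 16) n : ℤ) : ZMod 2)) = 0 from by decide]
    exact zero_mem _
  · rw [show (fun n => ((pw (⟨8, by norm_num⟩ : Fin 16) n : ℤ) : ZMod 2)) = 0 from by decide]
    exact zero_mem _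
  · rw [show (fun n => ((pw (⟨9, by norm_num⟩ : Fin 16) n : ℤ) : ZMod 2)) = 0 from by decide]
    exact zero_mem _
  · rw [show (fun n => ((pw (⟨10, by norm_num⟩ : Fin 16) n : ℤ) : ZMod 2)) = 0 from by decide]
    exact zero_mem _
  · rw [show (fun n => ((pw (⟨11, by norm_num⟩ : Fin 16) n : ℤ) : ZMod 2)) = 0 from by decide]
    exact zero_mem _
  · rw [show (fun n => ((pw (⟨12, by norm_num⟩ : Fin 16) n : ℤ) : ZMod 2)) = 0 from by decide]
    exact zero_mem _
  · rw [show (fun n => ((pw (⟨13, by norm_num⟩ : Fin 16) n : ℤ) : ZMod 2)) = 0 from by decide]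
    exact zero_mem _
  · rw [show (fun n => ((pw (⟨14, by norm_num⟩ : Fin 16) n : ℤ) : ZMod 2)) = 0 from by decide]
    exact zero_mem _
  · rw [show (fun n => ((pw (⟨15, by norm_num⟩ : Fin 16) n : ℤ) : ZMod 2)) = 0 from by decide]
    exact zero_mem _

set_option maxRecDepth 4000 in
set_option maxHeartbeats 1000000 in
lemma kwGolay : ∀ i : Fin 8, (fun n => ((kw i n : ℤ) : ZMod 2)) ∈ golayCode := by
  intro i; fin_cases i
  · rw [show (fun n => ((kw (⟨0, by norm_num⟩ : Fin 8) n : ℤ) : ZMod 2)) = indic (golayBasisSets 0) + indic (golayBasisSets 1) + indic (golayBasisSets 2) + indic (golayBasisSets 3) + indic (golayBasisSets 5) + indic (golayBasisSets 6) + indic (golayBasisSets 8) from by decide]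
    exact (add_mem (add_mem (add_mem (add_mem (add_mem (add_mem (gmem 0) (gmem 1)) (gmem 2)) (gmem 3)) (gmem 5)) (gmem 6)) (gmem 8))
  · rw [show (fun n => ((kw (⟨1, by norm_num⟩ : Fin 8) n : ℤ) : ZMod 2)) = 0 from by decide]
    exact zero_mem _
  · rw [show (fun n => ((kw (⟨2, by norm_num⟩ : Fin 8) n : ℤ) : ZMod 2)) = 0 from by decide]
    exact zero_mem _
  · rw [show (fun n => ((kw (⟨3, by norm_num⟩ : Fin 8) n : ℤ) : ZMod 2)) = 0 from by decide]
    exact zero_mem _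
  · rw [show (fun n => ((kw (⟨4, by norm_num⟩ : Fin 8) n : ℤ) : ZMod 2)) = 0 from by decide]
    exact zero_mem _
  · rw [show (fun n => ((kw (⟨5, by norm_num⟩ : Fin 8) n : ℤ) : ZMod 2)) = 0 from by decide]
    exact zero_mem _
  · rw [show (fun n => ((kw (⟨6, by norm_num⟩ : Fin 8) n : ℤ) : ZMod 2)) = 0 from by decide]
    exact zero_mem _
  · rw [show (fun n => ((kw (⟨7, by norm_num⟩ : Fin 8) n : ℤ) : ZMod 2)) = 0 from by decide]
    exact zero_mem _

lemma pwO : ∀ (i : Fin 16) (n : Fin 24), oB n = true → pw i n = 0 := by decide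
lemma kwT : ∀ (i : Fin 8) (n : Fin 24), oB n = false → kw i n = 0 := by decide

lemma NSet_sum {m : ℕ} (b : Fin m → V24) (wb : Fin m → Fin 24 → ℤ)
    (hb : ∀ i n, b i n = (wb i n : ℚ) / 2)
    (hg : ∀ i, (fun n => ((wb i n : ℤ) : ZMod 2)) ∈ golayCode)
    (c : Fin m → ℤ) : (∑ i, c i • b i) ∈ NSet := by
  refine ⟨fun n => ∑ i, c i * wb i n, fun n => ?_, ?_⟩
  · rw [Finset.sum_apply]
    push_cast [Finset.sum_div]
    exact Finset.sum_congr rfl fun i _ => by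
      rw [Pi.smul_apply, zsmul_eq_mul, hb]; ring
  · have he : (fun n => ((∑ i, c i * wb i n : ℤ) : ZMod 2)) =
        ∑ i, (c i : ZMod 2) • fun n => ((wb i n : ℤ) : ZMod 2) := by
      funext n
      rw [Finset.sum_apply]
      push_cast
      exact Finset.sum_congr rfl fun i _ => by rw [Pi.smul_apply, smul_eq_mul]
    rw [he]
    exact Submodule.sum_smul_mem _ _ fun i _ => hg i

lemma mem_PiTilde_sum (c : Fin 16 → ℤ) : (∑ i, c i • pB i) ∈ PiTilde := by
  refine ⟨NSet_sum pB pw (fun i n => rfl) pwGolay c, fun n hn => ?_⟩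
  rw [B24_apply]
  have hz : (∑ i, c i • pB i) n = 0 := by
    rw [Finset.sum_apply]
    refine Finset.sum_eq_zero fun i _ => ?_
    have : pB i n = 0 := by
      rw [show pB i n = (pw i n : ℚ)/2 from rfl, pwO i n ((oB_mem n).mp hn)]
      norm_num
    rw [Pi.smul_apply, this, smul_zero]
  rw [hz, mul_zero]

lemma mem_KTilde_sum (c : Fin 8 → ℤ) : (∑ i, c i • kB i) ∈ KTilde := by
  refine ⟨NSet_sum kB kw (fun i n => rfl) kwGolay c, fun n hn => ?_⟩
  rw [B24_apply]
  have hob : oB n = false := by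
    cases h : oB n
    · rfl
    · exact absurd ((oB_mem n).mpr h) hn
  have hz : (∑ i, c i • kB i) n = 0 := by
    rw [Finset.sum_apply]
    refine Finset.sum_eq_zero fun i _ => ?_
    have : kB i n = 0 := by
      rw [show kB i n = (kw i n : ℚ)/2 from rfl, kwT i n hob]
      norm_num
    rw [Pi.smul_apply, this, smul_zero]
  rw [hz, mul_zero]

set_option maxHeartbeats 2000000 in
lemma PiTilde_extract : ∀ v ∈ PiTilde, ∃ c : Fin 16 → ℤ, v = ∑ i, c i • pB i := by
  rintro v ⟨⟨w, hw, hgw⟩, horth⟩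
  have hw0 : ∀ n : Fin 24, oB n = true → w n = 0 := by
    intro n hn
    have h1 := horth n ((oB_mem n).mpr hn)
    rw [B24_apply, hw] at h1
    have h2 := two_mul_eq_zero h1
    have h3 : (w n : ℚ) = 0 := by linarith
    exact_mod_cast h3
  obtain ⟨c, hc⟩ := (golay_mem_iff _).mp hgw
  have hxs : ∀ n, ((w n : ℤ) : ZMod 2) = bz (XS (zb (c 0)) (zb (c 1)) (zb (c 2)) (zb (c 3)) (zb (c 4)) (zb (c 5)) (zb (c 6)) (zb (c 7)) (zb (c 8)) (zb (c 9)) (zb (c 10)) (zb (c 11)) n) := by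
    intro n
    have h4 := congrFun hc n
    rw [sum_apply_eq] at h4
    exact h4.symm
  have hhyp : ∀ n, oB n = true → XS (zb (c 0)) (zb (c 1)) (zb (c 2)) (zb (c 3)) (zb (c 4)) (zb (c 5)) (zb (c 6)) (zb (c 7)) (zb (c 8)) (zb (c 9)) (zb (c 10)) (zb (c 11)) n = false := by
    intro n hn
    apply bz_eq_zero
    rw [← hxs n, hw0 n hn]
    rfl
  obtain ⟨hp7, hp10, hp11, hp12, hp13, hp15, hp16, hp17, hp19, hp20, hp21⟩ := factP (zb (c 0)) (zb (c 1)) (zb (c 2)) (zb (c 3)) (zb (c 4)) (zb (c 5)) (zb (c 6)) (zb (c 7)) (zb (c 8)) (zb (c 9)) (zb (c 10)) (zb (c 11)) hhyp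
  have e7 : ((w (⟨7, by norm_num⟩ : Fin 24) : ℤ) : ZMod 2) = ((w (⟨0, by norm_num⟩ : Fin 24) : ℤ) : ZMod 2) + (((w (⟨3, by norm_num⟩ : Fin 24) : ℤ) : ZMod 2) + (((w (⟨6, by norm_num⟩ : Fin 24) : ℤ) : ZMod 2))) := by
    rw [hxs (⟨7, by norm_num⟩ : Fin 24), hxs (⟨0, by norm_num⟩ : Fin 24), hxs (⟨3, by norm_num⟩ : Fin 24), hxs (⟨6, by norm_num⟩ : Fin 24), hp7, addbz, addbz]
  obtain ⟨k7, hk7⟩ := par3 e7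
  have hk7Q : (w ((7 : Fin 24)) : ℚ) - ((w ((0 : Fin 24)) : ℚ) + ((w ((3 : Fin 24)) : ℚ) + (w ((6 : Fin 24)) : ℚ))) = 2 * (k7 : ℚ) := by exact_mod_cast hk7
  have e10 : ((w (⟨10, by norm_num⟩ : Fin 24) : ℤ) : ZMod 2) = ((w (⟨1, by norm_num⟩ : Fin 24) : ℤ) : ZMod 2) + (((w (⟨3, by norm_num⟩ : Fin 24) : ℤ) : ZMod 2) + (((w (⟨9, by norm_num⟩ : Fin 24) : ℤ) : ZMod 2))) := by
    rw [hxs (⟨10, by norm_num⟩ : Fin 24), hxs (⟨1, by norm_num⟩ : Fin 24), hxs (⟨3, by norm_num⟩ : Fin 24), hxs (⟨9, by norm_num⟩ : Fin 24), hp10, addbz, addbz]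
  obtain ⟨k10, hk10⟩ := par3 e10
  have hk10Q : (w ((10 : Fin 24)) : ℚ) - ((w ((1 : Fin 24)) : ℚ) + ((w ((3 : Fin 24)) : ℚ) + (w ((9 : Fin 24)) : ℚ))) = 2 * (k10 : ℚ) := by exact_mod_cast hk10
  have e11 : ((w (⟨11, by norm_num⟩ : Fin 24) : ℤ) : ZMod 2) = ((w (⟨0, by norm_num⟩ : Fin 24) : ℤ) : ZMod 2) + (((w (⟨1, by norm_num⟩ : Fin 24) : ℤ) : ZMod 2) + (((w (⟨3, by norm_num⟩ : Fin 24) : ℤ) : ZMod 2) + (((w (⟨6, by norm_num⟩ : Fin 24) : ℤ) : ZMod 2) + (((w (⟨9, by norm_num⟩ : Fin 24) : ℤ) : ZMod 2))))) := by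
    rw [hxs (⟨11, by norm_num⟩ : Fin 24), hxs (⟨0, by norm_num⟩ : Fin 24), hxs (⟨1, by norm_num⟩ : Fin 24), hxs (⟨3, by norm_num⟩ : Fin 24), hxs (⟨6, by norm_num⟩ : Fin 24), hxs (⟨9, by norm_num⟩ : Fin 24), hp11, addbz, addbz, addbz, addbz]
  obtain ⟨k11, hk11⟩ := par5 e11
  have hk11Q : (w ((11 : Fin 24)) : ℚ) - ((w ((0 : Fin 24)) : ℚ) + ((w ((1 : Fin 24)) : ℚ) + ((w ((3 : Fin 24)) : ℚ) + ((w ((6 : Fin 24)) : ℚ) + (w ((9 : Fin 24)) : ℚ))))) = 2 * (k11 : ℚ) := by exact_mod_cast hk11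
  have e12 : ((w (⟨12, by norm_num⟩ : Fin 24) : ℤ) : ZMod 2) = ((w (⟨3, by norm_num⟩ : Fin 24) : ℤ) : ZMod 2) + (((w (⟨6, by norm_num⟩ : Fin 24) : ℤ) : ZMod 2) + (((w (⟨9, by norm_num⟩ : Fin 24) : ℤ) : ZMod 2))) := by
    rw [hxs (⟨12, by norm_num⟩ : Fin 24), hxs (⟨3, by norm_num⟩ : Fin 24), hxs (⟨6, by norm_num⟩ : Fin 24), hxs (⟨9, by norm_num⟩ : Fin 24), hp12, addbz, addbz]
  obtain ⟨k12, hk12⟩ := par3 e12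
  have hk12Q : (w ((12 : Fin 24)) : ℚ) - ((w ((3 : Fin 24)) : ℚ) + ((w ((6 : Fin 24)) : ℚ) + (w ((9 : Fin 24)) : ℚ))) = 2 * (k12 : ℚ) := by exact_mod_cast hk12
  have e13 : ((w (⟨13, by norm_num⟩ : Fin 24) : ℤ) : ZMod 2) = ((w (⟨0, by norm_num⟩ : Fin 24) : ℤ) : ZMod 2) + (((w (⟨6, by norm_num⟩ : Fin 24) : ℤ) : ZMod 2) + (((w (⟨9, by norm_num⟩ : Fin 24) : ℤ) : ZMod 2))) := by
    rw [hxs (⟨13, by norm_num⟩ : Fin 24), hxs (⟨0, by norm_num⟩ : Fin 24), hxs (⟨6, by norm_num⟩ : Fin 24), hxs (⟨9, by norm_num⟩ : Fin 24), hp13, addbz, addbz]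
  obtain ⟨k13, hk13⟩ := par3 e13
  have hk13Q : (w ((13 : Fin 24)) : ℚ) - ((w ((0 : Fin 24)) : ℚ) + ((w ((6 : Fin 24)) : ℚ) + (w ((9 : Fin 24)) : ℚ))) = 2 * (k13 : ℚ) := by exact_mod_cast hk13
  have e15 : ((w (⟨15, by norm_num⟩ : Fin 24) : ℤ) : ZMod 2) = ((w (⟨1, by norm_num⟩ : Fin 24) : ℤ) : ZMod 2) + (((w (⟨3, by norm_num⟩ : Fin 24) : ℤ) : ZMod 2) + (((w (⟨6, by norm_num⟩ : Fin 24) : ℤ) : ZMod 2))) := by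
    rw [hxs (⟨15, by norm_num⟩ : Fin 24), hxs (⟨1, by norm_num⟩ : Fin 24), hxs (⟨3, by norm_num⟩ : Fin 24), hxs (⟨6, by norm_num⟩ : Fin 24), hp15, addbz, addbz]
  obtain ⟨k15, hk15⟩ := par3 e15
  have hk15Q : (w ((15 : Fin 24)) : ℚ) - ((w ((1 : Fin 24)) : ℚ) + ((w ((3 : Fin 24)) : ℚ) + (w ((6 : Fin 24)) : ℚ))) = 2 * (k15 : ℚ) := by exact_mod_cast hk15
  have e16 : ((w (⟨16, by norm_num⟩ : Fin 24) : ℤ) : ZMod 2) = ((w (⟨1, by norm_num⟩ : Fin 24) : ℤ) : ZMod 2) + (((w (⟨6, by norm_num⟩ : Fin 24) : ℤ) : ZMod 2) + (((w (⟨9, by norm_num⟩ : Fin 24) : ℤ) : ZMod 2))) := by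
    rw [hxs (⟨16, by norm_num⟩ : Fin 24), hxs (⟨1, by norm_num⟩ : Fin 24), hxs (⟨6, by norm_num⟩ : Fin 24), hxs (⟨9, by norm_num⟩ : Fin 24), hp16, addbz, addbz]
  obtain ⟨k16, hk16⟩ := par3 e16
  have hk16Q : (w ((16 : Fin 24)) : ℚ) - ((w ((1 : Fin 24)) : ℚ) + ((w ((6 : Fin 24)) : ℚ) + (w ((9 : Fin 24)) : ℚ))) = 2 * (k16 : ℚ) := by exact_mod_cast hk16
  have e17 : ((w (⟨17, by norm_num⟩ : Fin 24) : ℤ) : ZMod 2) = ((w (⟨0, by norm_num⟩ : Fin 24) : ℤ) : ZMod 2) + (((w (⟨1, by norm_num⟩ : Fin 24) : ℤ) : ZMod 2) + (((w (⟨3, by norm_num⟩ : Fin 24) : ℤ) : ZMod 2))) := by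
    rw [hxs (⟨17, by norm_num⟩ : Fin 24), hxs (⟨0, by norm_num⟩ : Fin 24), hxs (⟨1, by norm_num⟩ : Fin 24), hxs (⟨3, by norm_num⟩ : Fin 24), hp17, addbz, addbz]
  obtain ⟨k17, hk17⟩ := par3 e17
  have hk17Q : (w ((17 : Fin 24)) : ℚ) - ((w ((0 : Fin 24)) : ℚ) + ((w ((1 : Fin 24)) : ℚ) + (w ((3 : Fin 24)) : ℚ))) = 2 * (k17 : ℚ) := by exact_mod_cast hk17
  have e19 : ((w (⟨19, by norm_num⟩ : Fin 24) : ℤ) : ZMod 2) = ((w (⟨0, by norm_num⟩ : Fin 24) : ℤ) : ZMod 2) + (((w (⟨1, by norm_num⟩ : Fin 24) : ℤ) : ZMod 2) + (((w (⟨9, by norm_num⟩ : Fin 24) : ℤ) : ZMod 2))) := by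
    rw [hxs (⟨19, by norm_num⟩ : Fin 24), hxs (⟨0, by norm_num⟩ : Fin 24), hxs (⟨1, by norm_num⟩ : Fin 24), hxs (⟨9, by norm_num⟩ : Fin 24), hp19, addbz, addbz]
  obtain ⟨k19, hk19⟩ := par3 e19
  have hk19Q : (w ((19 : Fin 24)) : ℚ) - ((w ((0 : Fin 24)) : ℚ) + ((w ((1 : Fin 24)) : ℚ) + (w ((9 : Fin 24)) : ℚ))) = 2 * (k19 : ℚ) := by exact_mod_cast hk19
  have e20 : ((w (⟨20, by norm_num⟩ : Fin 24) : ℤ) : ZMod 2) = ((w (⟨0, by norm_num⟩ : Fin 24) : ℤ) : ZMod 2) + (((w (⟨1, by norm_num⟩ : Fin 24) : ℤ) : ZMod 2) + (((w (⟨6, by norm_num⟩ : Fin 24) : ℤ) : ZMod 2))) := by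
    rw [hxs (⟨20, by norm_num⟩ : Fin 24), hxs (⟨0, by norm_num⟩ : Fin 24), hxs (⟨1, by norm_num⟩ : Fin 24), hxs (⟨6, by norm_num⟩ : Fin 24), hp20, addbz, addbz]
  obtain ⟨k20, hk20⟩ := par3 e20
  have hk20Q : (w ((20 : Fin 24)) : ℚ) - ((w ((0 : Fin 24)) : ℚ) + ((w ((1 : Fin 24)) : ℚ) + (w ((6 : Fin 24)) : ℚ))) = 2 * (k20 : ℚ) := by exact_mod_cast hk20
  have e21 : ((w (⟨21, by norm_num⟩ : Fin 24) : ℤ) : ZMod 2) = ((w (⟨0, by norm_num⟩ : Fin 24) : ℤ) : ZMod 2) + (((w (⟨3, by norm_num⟩ : Fin 24) : ℤ) : ZMod 2) + (((w (⟨9, by norm_num⟩ : Fin 24) : ℤ) : ZMod 2))) := by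
    rw [hxs (⟨21, by norm_num⟩ : Fin 24), hxs (⟨0, by norm_num⟩ : Fin 24), hxs (⟨3, by norm_num⟩ : Fin 24), hxs (⟨9, by norm_num⟩ : Fin 24), hp21, addbz, addbz]
  obtain ⟨k21, hk21⟩ := par3 e21
  have hk21Q : (w ((21 : Fin 24)) : ℚ) - ((w ((0 : Fin 24)) : ℚ) + ((w ((3 : Fin 24)) : ℚ) + (w ((9 : Fin 24)) : ℚ))) = 2 * (k21 : ℚ) := by exact_mod_cast hk21
  have z2 : (w ((2 : Fin 24)) : ℚ) = 0 := by
    have h := hw0 (⟨2, by norm_num⟩ : Fin 24) (by decide)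
    exact_mod_cast h
  have z4 : (w ((4 : Fin 24)) : ℚ) = 0 := by
    have h := hw0 (⟨4, by norm_num⟩ : Fin 24) (by decide)
    exact_mod_cast h
  have z5 : (w ((5 : Fin 24)) : ℚ) = 0 := by
    have h := hw0 (⟨5, by norm_num⟩ : Fin 24) (by decide)
    exact_mod_cast h
  have z8 : (w ((8 : Fin 24)) : ℚ) = 0 := by
    have h := hw0 (⟨8, by norm_num⟩ : Fin 24) (by decide)
    exact_mod_cast h
  have z14 : (w ((14 : Fin 24)) : ℚ) = 0 := by
    have h := hw0 (⟨14, by norm_num⟩ : Fin 24) (by decide)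
    exact_mod_cast h
  have z18 : (w ((18 : Fin 24)) : ℚ) = 0 := by
    have h := hw0 (⟨18, by norm_num⟩ : Fin 24) (by decide)
    exact_mod_cast h
  have z22 : (w ((22 : Fin 24)) : ℚ) = 0 := by
    have h := hw0 (⟨22, by norm_num⟩ : Fin 24) (by decide)
    exact_mod_cast h
  have z23 : (w ((23 : Fin 24)) : ℚ) = 0 := by
    have h := hw0 (⟨23, by norm_num⟩ : Fin 24) (by decide)
    exact_mod_cast h
  refine ⟨![w (⟨0, by norm_num⟩ : Fin 24), w (⟨1, by norm_num⟩ : Fin 24), w (⟨3, by norm_num⟩ : Fin 24), w (⟨6, by norm_num⟩ : Fin 24), w (⟨9, by norm_num⟩ : Fin 24), k7, k10, k11, k12, k13, k15, k16, k17, k19, k20, k21], funext24 ?_ ?_ ?_ ?_ ?_ ?_ ?_ ?_ ?_ ?_ ?_ ?_ ?_ ?_ ?_ ?_ ?_ ?_ ?_ ?_ ?_ ?_ ?_ ?_⟩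
  all_goals rw [hw, expand16]
  all_goals simp only [pB, pw, kB, kw, Matrix.cons_val_zero', Matrix.cons_val_succ', Matrix.cons_val_zero, Matrix.cons_val_succ]
  all_goals push_cast
  all_goals linarith

set_option maxHeartbeats 2000000 in
lemma KTilde_extract : ∀ v ∈ KTilde, ∃ c : Fin 8 → ℤ, v = ∑ i, c i • kB i := by
  rintro v ⟨⟨w, hw, hgw⟩, horth⟩
  have hw0 : ∀ n : Fin 24, oB n = false → w n = 0 := by
    intro n hn
    have hnot : (n : ℕ) + 1 ∉ O9 := fun hmem => by
      rw [(oB_mem n).mp hmem] at hn; exact Bool.noConfusion hn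
    have h1 := horth n hnot
    rw [B24_apply, hw] at h1
    have h2 := two_mul_eq_zero h1
    have h3 : (w n : ℚ) = 0 := by linarith
    exact_mod_cast h3
  obtain ⟨c, hc⟩ := (golay_mem_iff _).mp hgw
  have hxs : ∀ n, ((w n : ℤ) : ZMod 2) = bz (XS (zb (c 0)) (zb (c 1)) (zb (c 2)) (zb (c 3)) (zb (c 4)) (zb (c 5)) (zb (c 6)) (zb (c 7)) (zb (c 8)) (zb (c 9)) (zb (c 10)) (zb (c 11)) n) := by
    intro n
    have h4 := congrFun hc n
    rw [sum_apply_eq] at h4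
    exact h4.symm
  have hhyp : ∀ n, oB n = false → XS (zb (c 0)) (zb (c 1)) (zb (c 2)) (zb (c 3)) (zb (c 4)) (zb (c 5)) (zb (c 6)) (zb (c 7)) (zb (c 8)) (zb (c 9)) (zb (c 10)) (zb (c 11)) n = false := by
    intro n hn
    apply bz_eq_zero
    rw [← hxs n, hw0 n hn]
    rfl
  obtain ⟨hp4, hp5, hp8, hp14, hp18, hp22, hp23⟩ := factK (zb (c 0)) (zb (c 1)) (zb (c 2)) (zb (c 3)) (zb (c 4)) (zb (c 5)) (zb (c 6)) (zb (c 7)) (zb (c 8)) (zb (c 9)) (zb (c 10)) (zb (c 11)) hhyp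
  have e4 : ((w (⟨4, by norm_num⟩ : Fin 24) : ℤ) : ZMod 2) = ((w (⟨2, by norm_num⟩ : Fin 24) : ℤ) : ZMod 2) := by
    rw [hxs (⟨4, by norm_num⟩ : Fin 24), hxs (⟨2, by norm_num⟩ : Fin 24), hp4]
  obtain ⟨k4, hk4⟩ := par2 e4
  have hk4Q : (w ((4 : Fin 24)) : ℚ) - (w ((2 : Fin 24)) : ℚ) = 2 * (k4 : ℚ) := by exact_mod_cast hk4
  have e5 : ((w (⟨5, by norm_num⟩ : Fin 24) : ℤ) : ZMod 2) = ((w (⟨2, by norm_num⟩ : Fin 24) : ℤ) : ZMod 2) := by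
    rw [hxs (⟨5, by norm_num⟩ : Fin 24), hxs (⟨2, by norm_num⟩ : Fin 24), hp5]
  obtain ⟨k5, hk5⟩ := par2 e5
  have hk5Q : (w ((5 : Fin 24)) : ℚ) - (w ((2 : Fin 24)) : ℚ) = 2 * (k5 : ℚ) := by exact_mod_cast hk5
  have e8 : ((w (⟨8, by norm_num⟩ : Fin 24) : ℤ) : ZMod 2) = ((w (⟨2, by norm_num⟩ : Fin 24) : ℤ) : ZMod 2) := by
    rw [hxs (⟨8, by norm_num⟩ : Fin 24), hxs (⟨2, by norm_num⟩ : Fin 24), hp8]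
  obtain ⟨k8, hk8⟩ := par2 e8
  have hk8Q : (w ((8 : Fin 24)) : ℚ) - (w ((2 : Fin 24)) : ℚ) = 2 * (k8 : ℚ) := by exact_mod_cast hk8
  have e14 : ((w (⟨14, by norm_num⟩ : Fin 24) : ℤ) : ZMod 2) = ((w (⟨2, by norm_num⟩ : Fin 24) : ℤ) : ZMod 2) := by
    rw [hxs (⟨14, by norm_num⟩ : Fin 24), hxs (⟨2, by norm_num⟩ : Fin 24), hp14]
  obtain ⟨k14, hk14⟩ := par2 e14
  have hk14Q : (w ((14 : Fin 24)) : ℚ) - (w ((2 : Fin 24)) : ℚ) = 2 * (k14 : ℚ) := by exact_mod_cast hk14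
  have e18 : ((w (⟨18, by norm_num⟩ : Fin 24) : ℤ) : ZMod 2) = ((w (⟨2, by norm_num⟩ : Fin 24) : ℤ) : ZMod 2) := by
    rw [hxs (⟨18, by norm_num⟩ : Fin 24), hxs (⟨2, by norm_num⟩ : Fin 24), hp18]
  obtain ⟨k18, hk18⟩ := par2 e18
  have hk18Q : (w ((18 : Fin 24)) : ℚ) - (w ((2 : Fin 24)) : ℚ) = 2 * (k18 : ℚ) := by exact_mod_cast hk18
  have e22 : ((w (⟨22, by norm_num⟩ : Fin 24) : ℤ) : ZMod 2) = ((w (⟨2, by norm_num⟩ : Fin 24) : ℤ) : ZMod 2) := by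
    rw [hxs (⟨22, by norm_num⟩ : Fin 24), hxs (⟨2, by norm_num⟩ : Fin 24), hp22]
  obtain ⟨k22, hk22⟩ := par2 e22
  have hk22Q : (w ((22 : Fin 24)) : ℚ) - (w ((2 : Fin 24)) : ℚ) = 2 * (k22 : ℚ) := by exact_mod_cast hk22
  have e23 : ((w (⟨23, by norm_num⟩ : Fin 24) : ℤ) : ZMod 2) = ((w (⟨2, by norm_num⟩ : Fin 24) : ℤ) : ZMod 2) := by
    rw [hxs (⟨23, by norm_num⟩ : Fin 24), hxs (⟨2, by norm_num⟩ : Fin 24), hp23]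
  obtain ⟨k23, hk23⟩ := par2 e23
  have hk23Q : (w ((23 : Fin 24)) : ℚ) - (w ((2 : Fin 24)) : ℚ) = 2 * (k23 : ℚ) := by exact_mod_cast hk23
  have z0 : (w ((0 : Fin 24)) : ℚ) = 0 := by
    have h := hw0 (⟨0, by norm_num⟩ : Fin 24) (by decide)
    exact_mod_cast h
  have z1 : (w ((1 : Fin 24)) : ℚ) = 0 := by
    have h := hw0 (⟨1, by norm_num⟩ : Fin 24) (by decide)
    exact_mod_cast h
  have z3 : (w ((3 : Fin 24)) : ℚ) = 0 := by
    have h := hw0 (⟨3, by norm_num⟩ : Fin 24) (by decide)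
    exact_mod_cast h
  have z6 : (w ((6 : Fin 24)) : ℚ) = 0 := by
    have h := hw0 (⟨6, by norm_num⟩ : Fin 24) (by decide)
    exact_mod_cast h
  have z7 : (w ((7 : Fin 24)) : ℚ) = 0 := by
    have h := hw0 (⟨7, by norm_num⟩ : Fin 24) (by decide)
    exact_mod_cast h
  have z9 : (w ((9 : Fin 24)) : ℚ) = 0 := by
    have h := hw0 (⟨9, by norm_num⟩ : Fin 24) (by decide)
    exact_mod_cast h
  have z10 : (w ((10 : Fin 24)) : ℚ) = 0 := by
    have h := hw0 (⟨10, by norm_num⟩ : Fin 24) (by decide)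
    exact_mod_cast h
  have z11 : (w ((11 : Fin 24)) : ℚ) = 0 := by
    have h := hw0 (⟨11, by norm_num⟩ : Fin 24) (by decide)
    exact_mod_cast h
  have z12 : (w ((12 : Fin 24)) : ℚ) = 0 := by
    have h := hw0 (⟨12, by norm_num⟩ : Fin 24) (by decide)
    exact_mod_cast h
  have z13 : (w ((13 : Fin 24)) : ℚ) = 0 := by
    have h := hw0 (⟨13, by norm_num⟩ : Fin 24) (by decide)
    exact_mod_cast h
  have z15 : (w ((15 : Fin 24)) : ℚ) = 0 := by
    have h := hw0 (⟨15, by norm_num⟩ : Fin 24) (by decide)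
    exact_mod_cast h
  have z16 : (w ((16 : Fin 24)) : ℚ) = 0 := by
    have h := hw0 (⟨16, by norm_num⟩ : Fin 24) (by decide)
    exact_mod_cast h
  have z17 : (w ((17 : Fin 24)) : ℚ) = 0 := by
    have h := hw0 (⟨17, by norm_num⟩ : Fin 24) (by decide)
    exact_mod_cast h
  have z19 : (w ((19 : Fin 24)) : ℚ) = 0 := by
    have h := hw0 (⟨19, by norm_num⟩ : Fin 24) (by decide)
    exact_mod_cast h
  have z20 : (w ((20 : Fin 24)) : ℚ) = 0 := by
    have h := hw0 (⟨20, by norm_num⟩ : Fin 24) (by decide)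
    exact_mod_cast h
  have z21 : (w ((21 : Fin 24)) : ℚ) = 0 := by
    have h := hw0 (⟨21, by norm_num⟩ : Fin 24) (by decide)
    exact_mod_cast h
  refine ⟨![w (⟨2, by norm_num⟩ : Fin 24), k4, k5, k8, k14, k18, k22, k23], funext24 ?_ ?_ ?_ ?_ ?_ ?_ ?_ ?_ ?_ ?_ ?_ ?_ ?_ ?_ ?_ ?_ ?_ ?_ ?_ ?_ ?_ ?_ ?_ ?_⟩
  all_goals rw [hw, expand8]
  all_goals simp only [pB, pw, kB, kw, Matrix.cons_val_zero', Matrix.cons_val_succ', Matrix.cons_val_zero, Matrix.cons_val_succ]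
  all_goals push_cast
  all_goals linarith

lemma f24_mem_NSet (n : Fin 24) : f24 n ∈ NSet := by
  refine ⟨fun i => if i = n then 2 else 0, fun i => ?_, ?_⟩
  · unfold f24; by_cases h : i = n <;> simp [h] <;> norm_num
  · have he : (fun i => (((if i = n then 2 else 0 : ℤ)) : ZMod 2)) = 0 := by
      funext i; by_cases h : i = n <;> simp [h] <;> decide
    rw [he]; exact zero_mem _

lemma coord_zero_of_PiTilde {v : V24} (hv : v ∈ PiTilde) {n : Fin 24}
    (hn : (n : ℕ) + 1 ∈ O9) : v n = 0 :=
  two_mul_eq_zero (by rw [← B24_apply]; exact hv.2 n hn)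

lemma coord_zero_of_KTilde {v : V24} (hv : v ∈ KTilde) {n : Fin 24}
    (hn : (n : ℕ) + 1 ∉ O9) : v n = 0 :=
  two_mul_eq_zero (by rw [← B24_apply]; exact hv.2 n hn)

lemma f24_mem_PiTilde {n : Fin 24} (hn : (n : ℕ) + 1 ∉ O9) : f24 n ∈ PiTilde := by
  refine ⟨f24_mem_NSet n, fun m hm => ?_⟩
  rw [B24_apply]
  have : f24 n m = 0 := by
    unfold f24
    rw [if_neg (fun e : m = n => hn (e ▸ hm))]
  rw [this, mul_zero]

lemma f24_mem_KTilde {n : Fin 24} (hn : (n : ℕ) + 1 ∈ O9) : f24 n ∈ KTilde := by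
  refine ⟨f24_mem_NSet n, fun m hm => ?_⟩
  rw [B24_apply]
  have : f24 n m = 0 := by
    unfold f24
    rw [if_neg (fun e : m = n => hm (e ▸ hn))]
  rw [this, mul_zero]

lemma B24_PiK {v u : V24} (hv : v ∈ PiTilde) (hu : u ∈ KTilde) : B24 v u = 0 := by
  unfold B24
  rw [Finset.sum_eq_zero, mul_zero]
  intro i _
  by_cases h : (i : ℕ) + 1 ∈ O9
  · rw [coord_zero_of_PiTilde hv h, zero_mul]
  · rw [coord_zero_of_KTilde hu h, mul_zero]

lemma B24_comm (u v : V24) : B24 u v = B24 v u := by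
  unfold B24
  congr 1
  exact Finset.sum_congr rfl fun i _ => mul_comm _ _

set_option maxRecDepth 4000 in
set_option maxHeartbeats 1000000 in
/-- `𝒪₉` is an octad of the Golay code, and `Π̃` and `K̃` are primitive sublattices of
the Niemeier lattice `N` of type `A₁²⁴`, of ranks 16 and 8 respectively, each being the
orthogonal complement of the other in `N`. -/
theorem piTilde_kTilde_primitive_orthogonal :
    (indic O9 ∈ golayCode ∧ weight (indic O9) = 8) ∧
    (∀ v ∈ NSet, (∃ k : ℤ, k ≠ 0 ∧ (k : ℚ) • v ∈ PiTilde) → v ∈ PiTilde) ∧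
    (∀ v ∈ NSet, (∃ k : ℤ, k ≠ 0 ∧ (k : ℚ) • v ∈ KTilde) → v ∈ KTilde) ∧
    (∃ b : Fin 16 → V24, PiTilde = { v | ∃ c : Fin 16 → ℤ, v = ∑ i, c i • b i }) ∧
    (∃ b : Fin 8 → V24, KTilde = { v | ∃ c : Fin 8 → ℤ, v = ∑ i, c i • b i }) ∧
    PiTilde = { v | v ∈ NSet ∧ ∀ w ∈ KTilde, B24 v w = 0 } ∧
    KTilde = { v | v ∈ NSet ∧ ∀ w ∈ PiTilde, B24 v w = 0 } := by
  refine ⟨⟨?_, by decide⟩, ?_, ?_, ?_, ?_, ?_, ?_⟩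
  · rw [show indic O9 = indic (golayBasisSets 0) + indic (golayBasisSets 1) + indic (golayBasisSets 2) + indic (golayBasisSets 3) + indic (golayBasisSets 5) + indic (golayBasisSets 6) + indic (golayBasisSets 8) from by decide]
    exact (add_mem (add_mem (add_mem (add_mem (add_mem (add_mem (gmem 0) (gmem 1)) (gmem 2)) (gmem 3)) (gmem 5)) (gmem 6)) (gmem 8))
  · rintro v hv ⟨k, hk0, hkm⟩
    refine ⟨hv, fun n hn => ?_⟩
    have h1 := coord_zero_of_PiTilde hkm hn
    rw [Pi.smul_apply, smul_eq_mul] at h1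
    rw [B24_apply]
    rcases mul_eq_zero.mp h1 with h | h
    · exact absurd h (Int.cast_ne_zero.mpr hk0)
    · rw [h, mul_zero]
  · rintro v hv ⟨k, hk0, hkm⟩
    refine ⟨hv, fun n hn => ?_⟩
    have h1 := coord_zero_of_KTilde hkm hn
    rw [Pi.smul_apply, smul_eq_mul] at h1
    rw [B24_apply]
    rcases mul_eq_zero.mp h1 with h | h
    · exact absurd h (Int.cast_ne_zero.mpr hk0)
    · rw [h, mul_zero]
  · refine ⟨pB, Set.ext fun v => ⟨fun hv => PiTilde_extract v hv, ?_⟩⟩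
    rintro ⟨c, hc⟩
    rw [hc]
    exact mem_PiTilde_sum c
  · refine ⟨kB, Set.ext fun v => ⟨fun hv => KTilde_extract v hv, ?_⟩⟩
    rintro ⟨c, hc⟩
    rw [hc]
    exact mem_KTilde_sum c
  · refine Set.ext fun v => ⟨fun hv => ⟨hv.1, fun u hu => B24_PiK hv hu⟩, ?_⟩
    rintro ⟨hN, hperp⟩
    exact ⟨hN, fun n hn => hperp (f24 n) (f24_mem_KTilde hn)⟩
  · refine Set.ext fun v => ⟨fun hv => ⟨hv.1, fun u hu => by
      rw [B24_comm]; exact B24_PiK hu hv⟩, ?_⟩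
    rintro ⟨hN, hperp⟩
    exact ⟨hN, fun n hn => hperp (f24 n) (f24_mem_PiTilde hn)⟩
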